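/- Let p be a prime, F a field of characteristic p, G a finite group, and u an element of the center of G of order p^n. Then the Loewy length of the center of the group algebra satisfies LL(Z(F[G])) ≤ p^n · LL(Z(F[G/⟨u⟩])). -/

import Mathlib

set_option synthInstance.maxHeartbeats 1000000
set_option maxHeartbeats 4000000

/-- The Loewy length of a ring: the smallest positive `L` such that the `L`-th power of the
Jacobson radical is zero. -/
noncomputable def loewyLength (A : Type*) [Ring A] : ℕ :=
  sInf {L : ℕ | 0 < L ∧ ((⊥ : Ideal A).jacobson) ^ L = ⊥}

lemma aux_loewyLength_le {A : Type*} [Ring A] {N : ℕ} (h0 : 0 < N)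
    (h : ((⊥ : Ideal A).jacobson) ^ N = ⊥) : loewyLength A ≤ N :=
  Nat.sInf_le ⟨h0, h⟩

lemma aux_loewyLength_spec (A : Type*) [CommRing A] [IsArtinianRing A] :
    0 < loewyLength A ∧ ((⊥ : Ideal A).jacobson) ^ (loewyLength A) = ⊥ := by
  obtain ⟨k, hk⟩ := IsArtinianRing.isNilpotent_jacobson_bot (R := A)
  have hk' : ((⊥ : Ideal A).jacobson) ^ k = ⊥ := by simpa using hk
  have hne : {L : ℕ | 0 < L ∧ ((⊥ : Ideal A).jacobson) ^ L = ⊥}.Nonempty :=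
    ⟨k + 1, Nat.succ_pos k, by rw [pow_succ, hk', Ideal.bot_mul]⟩
  exact Nat.sInf_mem hne

lemma aux_comap_pow_le {R S : Type*} [CommRing R] [CommRing S] (f : R →+* S)
    (I : Ideal S) : ∀ m : ℕ, (Ideal.comap f I) ^ m ≤ Ideal.comap f (I ^ m)
  | 0 => by simp
  | m + 1 => by
    rw [pow_succ, pow_succ]
    refine Ideal.mul_le.mpr fun x hx y hy => Ideal.mem_comap.mpr ?_
    rw [map_mul]
    exact Ideal.mul_mem_mul (aux_comap_pow_le f I m hx) hy

section MA

open MonoidAlgebra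

variable {F : Type*} [Field F] {G : Type*} [Group G]

lemma aux_pow_sub_one_mem (u : G) (m : ℕ) :
    (single u (1 : F)) ^ m - 1 ∈ Ideal.span {(single u (1 : F)) - 1} := by
  induction m with
  | zero => simp
  | succ m ih =>
    have h : (single u (1 : F)) ^ (m + 1) - 1
        = (single u (1 : F)) ^ m * ((single u (1 : F)) - 1)
          + ((single u (1 : F)) ^ m - 1) := by
      rw [pow_succ]; noncomm_ring
    rw [h]
    refine Ideal.add_mem _ ?_ ih
    simpa [smul_eq_mul] using
      Submodule.smul_mem (Ideal.span {(single u (1 : F)) - 1})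
        ((single u (1 : F)) ^ m) (Submodule.mem_span_singleton_self _)

lemma aux_single_sub_single_mem [Finite G] (u : G) [(Subgroup.zpowers u).Normal]
    {g h : G}
    (hgh : QuotientGroup.mk' (Subgroup.zpowers u) h
      = QuotientGroup.mk' (Subgroup.zpowers u) g) (c : F) :
    single g c - single h c ∈ Ideal.span {(single u (1 : F)) - 1} := by
  obtain ⟨z, hz, hg⟩ := (QuotientGroup.mk'_eq_mk' _).mp hgh
  obtain ⟨m, hm⟩ := ((isOfFinOrder_of_finite u).mem_powers_iff_mem_zpowers).mpr hz
  have hm' : u ^ m = z := hm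
  have hg' : g = h * u ^ m := by rw [hm', hg]
  have key : single g c - single h c
      = single h c * ((single u (1 : F)) ^ m - 1) := by
    rw [mul_sub, mul_one, single_pow, one_pow, single_mul_single, mul_one, hg']
  rw [key]
  simpa [smul_eq_mul] using
    Submodule.smul_mem (Ideal.span {(single u (1 : F)) - 1}) (single h c)
      (aux_pow_sub_one_mem u m)

lemma aux_single_central (u : G) (hu : u ∈ Subgroup.center G)
    (a : MonoidAlgebra F G) :
    a * single u (1 : F) = single u (1 : F) * a := by
  induction a using MonoidAlgebra.induction_on with
  | of g =>
    show single g (1 : F) * single u 1 = single u 1 * single g 1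
    rw [single_mul_single, single_mul_single, one_mul,
      Subgroup.mem_center_iff.mp hu g]
  | add a b ha hb => rw [add_mul, mul_add, ha, hb]
  | smul r a ha => rw [smul_mul_assoc, ha, mul_smul_comm]

lemma aux_ker_le_span [Fintype G] (u : G) [(Subgroup.zpowers u).Normal]
    (z : MonoidAlgebra F G)
    (hz : Finsupp.mapDomain (⇑(QuotientGroup.mk' (Subgroup.zpowers u))) z.coeff = 0) :
    z ∈ Ideal.span {(single u (1 : F)) - 1} := by
  classical
  set π : G → G ⧸ Subgroup.zpowers u := ⇑(QuotientGroup.mk' (Subgroup.zpowers u))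
    with hπ
  set s : (G ⧸ Subgroup.zpowers u) → G := Quotient.out with hs
  have h0 : Finsupp.mapDomain (fun g => s (π g)) z.coeff = 0 := by
    rw [show (fun g => s (π g)) = s ∘ π from rfl, Finsupp.mapDomain_comp, hz,
      Finsupp.mapDomain_zero]
  have hrepr : z = ∑ g ∈ z.coeff.support, (single g (z.coeff g) - single (s (π g)) (z.coeff g)) := by
    rw [Finset.sum_sub_distrib]
    have h1 : ∑ g ∈ z.coeff.support, single g (z.coeff g) = z := z.sum_coeff_single
    have h2 : ∑ g ∈ z.coeff.support, single (s (π g)) (z.coeff g)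
        = MonoidAlgebra.ofCoeff (Finsupp.mapDomain (fun g => s (π g)) z.coeff) := by
      rw [Finsupp.mapDomain, Finsupp.sum, MonoidAlgebra.ofCoeff_sum]; rfl
    rw [h1, h2, h0, MonoidAlgebra.ofCoeff_zero, sub_zero]
  rw [hrepr]
  refine Ideal.sum_mem _ fun g hg => ?_
  refine aux_single_sub_single_mem u ?_ (z.coeff g)
  show π (s (π g)) = π g
  exact QuotientGroup.out_eq' (π g)

end MA

theorem loewyLength_center_le_pow_mul (p n : ℕ) (hp : p.Prime)
    (F : Type*) [Field F] [CharP F p] (G : Type*) [Group G] [Fintype G]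
    (u : G) (hu : u ∈ Subgroup.center G) (hord : orderOf u = p ^ n)
    [hN : (Subgroup.zpowers u).Normal] :
    loewyLength (Subalgebra.center F (MonoidAlgebra F G)) ≤
      p ^ n * loewyLength (Subalgebra.center F
        (MonoidAlgebra F (G ⧸ Subgroup.zpowers u))) := by
  classical
  haveI := Fact.mk hp
  set U := Subgroup.zpowers u with hU
  set Q := G ⧸ U with hQ
  set Z := Subalgebra.center F (MonoidAlgebra F G) with hZ
  set Z' := Subalgebra.center F (MonoidAlgebra F Q) with hZ'
  set Pr : MonoidAlgebra F G →+* MonoidAlgebra F Q :=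
    MonoidAlgebra.mapDomainRingHom F (QuotientGroup.mk' U) with hPr
  -- Artinian instances
  haveI : Module.Finite F (MonoidAlgebra F G) :=
    Module.Finite.equiv (MonoidAlgebra.coeffLinearEquiv F).symm
  haveI : Module.Finite F (MonoidAlgebra F Q) :=
    Module.Finite.equiv (MonoidAlgebra.coeffLinearEquiv F).symm
  haveI : Module.Finite F Z :=
    FiniteDimensional.finiteDimensional_submodule (Subalgebra.toSubmodule Z)
  haveI : Module.Finite F Z' :=
    FiniteDimensional.finiteDimensional_submodule (Subalgebra.toSubmodule Z')
  haveI : IsArtinianRing Z := IsArtinianRing.of_finite F Z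
  haveI : IsArtinianRing Z' := IsArtinianRing.of_finite F Z'
  -- surjectivity of Pr
  have hπs : Function.Surjective Pr := by
    intro y
    refine ⟨MonoidAlgebra.ofCoeff (Finsupp.mapDomain Quotient.out y.coeff), ?_⟩
    show MonoidAlgebra.ofCoeff (Finsupp.mapDomain (⇑(QuotientGroup.mk' U))
      (Finsupp.mapDomain Quotient.out y.coeff)) = y
    rw [← Finsupp.mapDomain_comp]
    have he : (⇑(QuotientGroup.mk' U)) ∘ (Quotient.out : Q → G) = id := by
      funext q; exact QuotientGroup.out_eq' q
    rw [he, Finsupp.mapDomain_id]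
  -- the induced map on centers
  have hcent : ∀ z : Z, (Pr (z : MonoidAlgebra F G)) ∈ Z' := by
    intro z
    rw [hZ', Subalgebra.mem_center_iff]
    intro b
    obtain ⟨a, rfl⟩ := hπs b
    rw [← map_mul, ← map_mul]
    congr 1
    exact Subalgebra.mem_center_iff.mp z.2 a
  let φ : Z →+* Z' :=
    { toFun := fun z => ⟨Pr (z : MonoidAlgebra F G), hcent z⟩
      map_one' := Subtype.ext (by push_cast; simp)
      map_mul' := fun a b => Subtype.ext (by push_cast; simp)
      map_zero' := Subtype.ext (by push_cast; simp)
      map_add' := fun a b => Subtype.ext (by push_cast; simp) }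
  have hφ : ∀ z : Z, (φ z : MonoidAlgebra F Q) = Pr (z : MonoidAlgebra F G) :=
    fun z => rfl
  -- the central nilpotent element
  set X : MonoidAlgebra F G := MonoidAlgebra.single u (1 : F) - 1 with hX
  haveI : CharP (MonoidAlgebra F G) p :=
    charP_of_injective_algebraMap
      (algebraMap F (MonoidAlgebra F G)).injective p
  have hXpow : X ^ p ^ n = 0 := by
    rw [hX, sub_pow_char_pow_of_commute p n (Commute.one_right _),
      MonoidAlgebra.single_pow, one_pow, one_pow, ← hord, pow_orderOf_eq_one,
      ← MonoidAlgebra.one_def, sub_self]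
  have hXc : ∀ a : MonoidAlgebra F G, a * X = X * a := by
    intro a
    rw [hX, mul_sub, sub_mul, mul_one, one_mul, aux_single_central u hu a]
  -- the ideal I₀
  set val : Z →+* MonoidAlgebra F G := Z.subtype with hval
  set I₀ : Ideal Z := Ideal.comap val (Ideal.span {X}) with hI₀
  -- Loewy data for Z'
  obtain ⟨hLpos, hLpow⟩ := aux_loewyLength_spec Z'
  set L := loewyLength Z' with hL
  refine aux_loewyLength_le (Nat.mul_pos (pow_pos hp.pos n) hLpos) ?_
  rw [← le_bot_iff, mul_comm, pow_mul]
  set J : Ideal Z := (⊥ : Ideal Z).jacobson with hJdef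
  -- Step 1 : J ≤ comap φ J'
  have hJ : J ≤ Ideal.comap φ ((⊥ : Ideal Z').jacobson) := by
    intro z hz
    obtain ⟨k, hk⟩ := IsArtinianRing.isNilpotent_jacobson_bot (R := Z)
    have hk' : J ^ k = ⊥ := by simpa [hJdef] using hk
    have hzk : z ^ k = 0 := by
      have h := Ideal.pow_mem_pow hz k
      rw [hk'] at h
      simpa using h
    have hnilz : IsNilpotent z := ⟨k, hzk⟩
    have hnil : IsNilpotent (φ z) := hnilz.map φ
    refine Ideal.mem_comap.mpr (Ideal.radical_le_jacobson ?_)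
    have : φ z ∈ nilradical Z' := mem_nilradical.mpr hnil
    simpa [nilradical] using this
  -- Step 2 : J^L ≤ ker φ
  have h2 : J ^ L ≤ Ideal.comap φ (⊥ : Ideal Z') := by
    calc J ^ L ≤ (Ideal.comap φ ((⊥ : Ideal Z').jacobson)) ^ L :=
          Ideal.pow_right_mono hJ L
      _ ≤ Ideal.comap φ (((⊥ : Ideal Z').jacobson) ^ L) := aux_comap_pow_le φ _ L
      _ = Ideal.comap φ ⊥ := by rw [hL]; exact congrArg (Ideal.comap φ) hLpow
  -- Step 3 : ker φ ≤ I₀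
  have h3 : Ideal.comap φ (⊥ : Ideal Z') ≤ I₀ := by
    intro z hz
    have hz0 : Pr ((z : MonoidAlgebra F G)) = 0 := by
      have h : φ z = 0 := by simpa using Ideal.mem_comap.mp hz
      have h' := congrArg (Subtype.val) h
      simpa [hφ] using h'
    refine Ideal.mem_comap.mpr ?_
    refine aux_ker_le_span u ((z : MonoidAlgebra F G)) ?_
    exact congrArg MonoidAlgebra.coeff hz0
  -- Step 4 : I₀ ^ m ≤ comap val (span {X ^ m})
  have h4 : ∀ m : ℕ, I₀ ^ m ≤ Ideal.comap val (Ideal.span {X ^ m}) := by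
    intro m
    induction m with
    | zero => simp [Ideal.span_singleton_one]
    | succ m ih =>
      rw [pow_succ, pow_succ]
      refine Ideal.mul_le.mpr fun a ha b hb => Ideal.mem_comap.mpr ?_
      obtain ⟨c, hc⟩ := Submodule.mem_span_singleton.mp (Ideal.mem_comap.mp (ih ha))
      obtain ⟨d, hd⟩ := Submodule.mem_span_singleton.mp (Ideal.mem_comap.mp hb)
      refine Submodule.mem_span_singleton.mpr ⟨c * d, ?_⟩
      have hcm : d * X ^ m = X ^ m * d :=
        (show Commute d X from hXc d).pow_right m
      rw [smul_eq_mul] at hc hd ⊢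
      rw [map_mul, ← hc, ← hd]
      rw [mul_assoc c d, ← mul_assoc d (X ^ m) X, hcm, mul_assoc (X ^ m) d X,
        ← mul_assoc c (X ^ m)]
  -- conclude
  have h5 : I₀ ^ p ^ n ≤ (⊥ : Ideal Z) := by
    refine (h4 (p ^ n)).trans ?_
    rw [hXpow]
    intro z hz
    have h : val z ∈ Ideal.span {(0 : MonoidAlgebra F G)} := Ideal.mem_comap.mp hz
    obtain ⟨c, hc⟩ := Submodule.mem_span_singleton.mp h
    have h' : val z = 0 := by rw [← hc, smul_zero]
    have h'' : z = 0 := by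
      apply Subtype.ext
      simpa [hval] using h'
    simp [h'']
  calc (J ^ L) ^ p ^ n ≤ I₀ ^ p ^ n := Ideal.pow_right_mono (h2.trans h3) _
    _ ≤ ⊥ := h5
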